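/- Let C ≥ 2 and d ≥ 1 be integers, h ∈ [0,1], and fix two distinct classes c, c' ∈ Fin C. Let V_1,…,V_d and U_1,…,U_d be 2d mutually independent Fin C-valued random variables, where each V_k has law ν_c and each U_k has law ν_{c'}. Let W^V be the aggregated label vector of (V_k) with anchor class c and W^U the aggregated label vector of (U_k) with anchor class c'. Then E[ ∑_{a ∈ Fin C} W^V_a · W^U_a ] = 2(h·d+1)(1−h)·d / ((C−1)(d+1)²) + (C−2)·((1−h)·d)² / ((C−1)²(d+1)²). -/

import Mathlib

open scoped BigOperators
open MeasureTheory ProbabilityTheory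

/-- `Y` has law `ν_c`: it takes the value `c` with probability `h` and each of the
other `C - 1` values with probability `(1 - h)/(C - 1)`. -/
def HasLawNu {Ω : Type*} [MeasurableSpace Ω] {C : ℕ} (P : Measure Ω)
    (h : ℝ) (c : Fin C) (Y : Ω → Fin C) : Prop :=
  Measurable Y ∧
    ∀ a : Fin C, P (Y ⁻¹' {a}) =
      ENNReal.ofReal (if a = c then h else (1 - h) / ((C : ℝ) - 1))

/-- The aggregated label vector of the family `X` with anchor class `c`:
`W_a = (𝟙[a = c] + #{k : X_k = a})/(d+1)`. -/
noncomputable def aggW {Ω : Type*} {C : ℕ} (d : ℕ) (c : Fin C)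
    (X : Fin d → Ω → Fin C) (ω : Ω) (a : Fin C) : ℝ :=
  ((if a = c then (1 : ℝ) else 0) +
      (Finset.univ.filter fun k => X k ω = a).card) / ((d : ℝ) + 1)

section Aux

variable {Ω : Type*} [MeasurableSpace Ω] {C : ℕ} {P : Measure Ω} [IsProbabilityMeasure P]

lemma ind_eq_indicator (X : Ω → Fin C) (a : Fin C) :
    (fun ω => (if X ω = a then (1 : ℝ) else 0)) =
      (X ⁻¹' {a}).indicator (fun _ => (1 : ℝ)) := by
  funext ω
  by_cases hx : X ω = a <;> simp [Set.indicator_apply, hx]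

lemma ind_integrable {X : Ω → Fin C} (hX : Measurable X) (a : Fin C) :
    Integrable (fun ω => (if X ω = a then (1 : ℝ) else 0)) P := by
  rw [ind_eq_indicator]
  exact (integrable_const 1).indicator (hX (measurableSet_singleton a))

lemma ind_integral {X : Ω → Fin C} (hX : Measurable X) (a : Fin C) :
    ∫ ω, (if X ω = a then (1 : ℝ) else 0) ∂P = (P (X ⁻¹' {a})).toReal := by
  rw [ind_eq_indicator]
  exact integral_indicator_one (hX (measurableSet_singleton a))

lemma ind_mul_eq_indicator (X Y : Ω → Fin C) (a b : Fin C) :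
    (fun ω => (if X ω = a then (1 : ℝ) else 0) * (if Y ω = b then (1 : ℝ) else 0)) =
      (X ⁻¹' {a} ∩ Y ⁻¹' {b}).indicator (fun _ => (1 : ℝ)) := by
  funext ω
  by_cases h1 : X ω = a <;> by_cases h2 : Y ω = b <;>
    simp [Set.indicator_apply, h1, h2]

lemma ind_mul_integrable {X Y : Ω → Fin C} (hX : Measurable X) (hY : Measurable Y)
    (a b : Fin C) :
    Integrable
      (fun ω => (if X ω = a then (1 : ℝ) else 0) * (if Y ω = b then (1 : ℝ) else 0)) P := by
  rw [ind_mul_eq_indicator]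
  exact (integrable_const 1).indicator
    ((hX (measurableSet_singleton a)).inter (hY (measurableSet_singleton b)))

lemma ind_mul_integral {X Y : Ω → Fin C} (hX : Measurable X) (hY : Measurable Y)
    (hXY : IndepFun X Y P) (a b : Fin C) :
    ∫ ω, (if X ω = a then (1 : ℝ) else 0) * (if Y ω = b then (1 : ℝ) else 0) ∂P =
      (P (X ⁻¹' {a})).toReal * (P (Y ⁻¹' {b})).toReal := by
  rw [ind_mul_eq_indicator]
  have h1 : ∫ ω, (X ⁻¹' {a} ∩ Y ⁻¹' {b}).indicator (fun _ => (1 : ℝ)) ω ∂P =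
      (P (X ⁻¹' {a} ∩ Y ⁻¹' {b})).toReal :=
    integral_indicator_one
      ((hX (measurableSet_singleton a)).inter (hY (measurableSet_singleton b)))
  rw [h1, hXY.measure_inter_preimage_eq_mul _ _ (measurableSet_singleton a)
    (measurableSet_singleton b), ENNReal.toReal_mul]

end Aux

theorem expectation_similarity_different_class
    {Ω : Type*} [MeasurableSpace Ω] (P : Measure Ω) [IsProbabilityMeasure P]
    (C d : ℕ) (hC : 2 ≤ C) (hd : 1 ≤ d) (h : ℝ) (h0 : 0 ≤ h) (h1 : h ≤ 1)
    (c c' : Fin C) (hcc' : c ≠ c') (V U : Fin d → Ω → Fin C)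
    (hlawV : ∀ k, HasLawNu P h c (V k)) (hlawU : ∀ k, HasLawNu P h c' (U k))
    (hindep : iIndepFun (Sum.elim V U) P) :
    ∫ ω, ∑ a, aggW d c V ω a * aggW d c' U ω a ∂P =
      2 * (h * d + 1) * ((1 - h) * d) / (((C : ℝ) - 1) * ((d : ℝ) + 1) ^ 2) +
        ((C : ℝ) - 2) * ((1 - h) * d) ^ 2 /
          (((C : ℝ) - 1) ^ 2 * ((d : ℝ) + 1) ^ 2) := by
  have hVm : ∀ k, Measurable (V k) := fun k => (hlawV k).1
  have hUm : ∀ k, Measurable (U k) := fun k => (hlawU k).1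
  set q : ℝ := (1 - h) / ((C : ℝ) - 1) with hq
  have hC1 : (1 : ℝ) ≤ (C : ℝ) - 1 := by
    have : (2 : ℝ) ≤ (C : ℝ) := by exact_mod_cast hC
    linarith
  have hq0 : 0 ≤ q := div_nonneg (by linarith) (by linarith)
  -- probabilities of single events
  have hPV : ∀ (k : Fin d) (a : Fin C),
      (P ((V k) ⁻¹' {a})).toReal = if a = c then h else q := by
    intro k a
    rw [(hlawV k).2 a, ENNReal.toReal_ofReal]
    by_cases hac : a = c <;> simp [hac, h0, hq0, hq] <;> exact hq0
  have hPU : ∀ (k : Fin d) (a : Fin C),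
      (P ((U k) ⁻¹' {a})).toReal = if a = c' then h else q := by
    intro k a
    rw [(hlawU k).2 a, ENNReal.toReal_ofReal]
    by_cases hac : a = c' <;> simp [hac, h0, hq0, hq] <;> exact hq0
  have hVUindep : ∀ (k l : Fin d), IndepFun (V k) (U l) P := by
    intro k l
    have := hindep.indepFun (i := Sum.inl k) (j := Sum.inr l) (by simp)
    simpa using this
  -- rewrite the integrand pointwise
  have hpoint : ∀ ω, ∑ a, aggW d c V ω a * aggW d c' U ω a =
      (∑ a : Fin C,
        ((if a = c then (1 : ℝ) else 0) * (if a = c' then (1 : ℝ) else 0) +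
          (if a = c then (1 : ℝ) else 0) * ∑ l, (if U l ω = a then (1 : ℝ) else 0) +
          (if a = c' then (1 : ℝ) else 0) * ∑ k, (if V k ω = a then (1 : ℝ) else 0) +
          ∑ k, ∑ l, (if V k ω = a then (1 : ℝ) else 0) * (if U l ω = a then (1 : ℝ) else 0)))
        / ((d : ℝ) + 1) ^ 2 := by
    intro ω
    rw [Finset.sum_div]
    refine Finset.sum_congr rfl fun a _ => ?_
    have hcardV : ((Finset.univ.filter fun k => V k ω = a).card : ℝ) =
        ∑ k, (if V k ω = a then (1 : ℝ) else 0) := by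
      rw [Finset.card_filter]; push_cast; rfl
    have hcardU : ((Finset.univ.filter fun l => U l ω = a).card : ℝ) =
        ∑ l, (if U l ω = a then (1 : ℝ) else 0) := by
      rw [Finset.card_filter]; push_cast; rfl
    rw [aggW, aggW, hcardV, hcardU, div_mul_div_comm, ← sq]
    congr 1
    rw [add_mul, mul_add, mul_add, Finset.sum_mul_sum]
    ring
  simp only [hpoint]
  -- integrability bits
  have hintV : ∀ (k : Fin d) (a : Fin C),
      Integrable (fun ω => (if V k ω = a then (1 : ℝ) else 0)) P :=
    fun k a => ind_integrable (hVm k) a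
  have hintU : ∀ (l : Fin d) (a : Fin C),
      Integrable (fun ω => (if U l ω = a then (1 : ℝ) else 0)) P :=
    fun l a => ind_integrable (hUm l) a
  have hintVU : ∀ (k l : Fin d) (a : Fin C),
      Integrable (fun ω =>
        (if V k ω = a then (1 : ℝ) else 0) * (if U l ω = a then (1 : ℝ) else 0)) P :=
    fun k l a => ind_mul_integrable (hVm k) (hUm l) a a
  have hintTerm : ∀ a : Fin C, Integrable (fun ω =>
      (if a = c then (1 : ℝ) else 0) * (if a = c' then (1 : ℝ) else 0) +
        (if a = c then (1 : ℝ) else 0) * ∑ l, (if U l ω = a then (1 : ℝ) else 0) +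
        (if a = c' then (1 : ℝ) else 0) * ∑ k, (if V k ω = a then (1 : ℝ) else 0) +
        ∑ k, ∑ l, (if V k ω = a then (1 : ℝ) else 0) * (if U l ω = a then (1 : ℝ) else 0)) P := by
    intro a
    refine (((integrable_const _).add ?_).add ?_).add ?_
    · exact ((integrable_finset_sum _ fun l _ => hintU l a).const_mul _)
    · exact ((integrable_finset_sum _ fun k _ => hintV k a).const_mul _)
    · exact integrable_finset_sum _ fun k _ => integrable_finset_sum _ fun l _ => hintVU k l a
  rw [integral_div, integral_finset_sum _ fun a _ => hintTerm a]
  -- compute each integral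
  have hterm : ∀ a : Fin C,
      (∫ ω, ((if a = c then (1 : ℝ) else 0) * (if a = c' then (1 : ℝ) else 0) +
        (if a = c then (1 : ℝ) else 0) * ∑ l, (if U l ω = a then (1 : ℝ) else 0) +
        (if a = c' then (1 : ℝ) else 0) * ∑ k, (if V k ω = a then (1 : ℝ) else 0) +
        ∑ k, ∑ l, (if V k ω = a then (1 : ℝ) else 0) * (if U l ω = a then (1 : ℝ) else 0)) ∂P) =
      (if a = c then (1 : ℝ) else 0) * (if a = c' then (1 : ℝ) else 0) +
        (if a = c then (1 : ℝ) else 0) * ((d : ℝ) * (if a = c' then h else q)) +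
        (if a = c' then (1 : ℝ) else 0) * ((d : ℝ) * (if a = c then h else q)) +
        (d : ℝ) ^ 2 * ((if a = c then h else q) * (if a = c' then h else q)) := by
    intro a
    have iA : Integrable
        (fun _ : Ω => (if a = c then (1 : ℝ) else 0) * (if a = c' then (1 : ℝ) else 0)) P :=
      integrable_const _
    have iB : Integrable (fun ω =>
        (if a = c then (1 : ℝ) else 0) * ∑ l, (if U l ω = a then (1 : ℝ) else 0)) P :=
      (integrable_finset_sum _ fun l _ => hintU l a).const_mul _
    have iC : Integrable (fun ω =>
        (if a = c' then (1 : ℝ) else 0) * ∑ k, (if V k ω = a then (1 : ℝ) else 0)) P :=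
      (integrable_finset_sum _ fun k _ => hintV k a).const_mul _
    have iD : Integrable (fun ω => ∑ k, ∑ l,
        (if V k ω = a then (1 : ℝ) else 0) * (if U l ω = a then (1 : ℝ) else 0)) P :=
      integrable_finset_sum _ fun k _ => integrable_finset_sum _ fun l _ => hintVU k l a
    have iAB : Integrable (fun ω =>
        (if a = c then (1 : ℝ) else 0) * (if a = c' then (1 : ℝ) else 0) +
          (if a = c then (1 : ℝ) else 0) * ∑ l, (if U l ω = a then (1 : ℝ) else 0)) P :=
      iA.add iB
    have iABC : Integrable (fun ω =>
        (if a = c then (1 : ℝ) else 0) * (if a = c' then (1 : ℝ) else 0) +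
          (if a = c then (1 : ℝ) else 0) * ∑ l, (if U l ω = a then (1 : ℝ) else 0) +
          (if a = c' then (1 : ℝ) else 0) * ∑ k, (if V k ω = a then (1 : ℝ) else 0)) P :=
      iAB.add iC
    rw [integral_add iABC iD, integral_add iAB iC, integral_add iA iB]
    congr 1
    congr 1
    congr 1
    · simp
    · rw [integral_const_mul, integral_finset_sum _ fun l _ => hintU l a]
      congr 1
      rw [Finset.sum_congr rfl fun l _ => (ind_integral (hUm l) a).trans (hPU l a)]
      simp [mul_comm]
    · rw [integral_const_mul, integral_finset_sum _ fun k _ => hintV k a]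
      congr 1
      rw [Finset.sum_congr rfl fun k _ => (ind_integral (hVm k) a).trans (hPV k a)]
      simp [mul_comm]
    · rw [integral_finset_sum _ fun k _ => integrable_finset_sum _ fun l _ => hintVU k l a]
      rw [Finset.sum_congr rfl fun k _ => integral_finset_sum _ fun l _ => hintVU k l a]
      rw [Finset.sum_congr rfl fun k _ => Finset.sum_congr rfl fun l _ =>
        ((ind_mul_integral (hVm k) (hUm l) (hVUindep k l) a a).trans
          (by rw [hPV k a, hPU l a]))]
      simp [sq]; ring
  rw [Finset.sum_congr rfl fun a _ => hterm a]
  -- now a purely algebraic finite-sum computation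
  have hsum : ∑ a : Fin C,
      ((if a = c then (1 : ℝ) else 0) * (if a = c' then (1 : ℝ) else 0) +
        (if a = c then (1 : ℝ) else 0) * ((d : ℝ) * (if a = c' then h else q)) +
        (if a = c' then (1 : ℝ) else 0) * ((d : ℝ) * (if a = c then h else q)) +
        (d : ℝ) ^ 2 * ((if a = c then h else q) * (if a = c' then h else q))) =
      2 * ((d : ℝ) * q + (d : ℝ) ^ 2 * (h * q)) + ((C : ℝ) - 2) * ((d : ℝ) ^ 2 * q ^ 2) := by
    have hsub : ({c, c'} : Finset (Fin C)) ⊆ Finset.univ := Finset.subset_univ _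
    rw [← Finset.sum_sdiff hsub, Finset.sum_pair hcc']
    have hrest : ∀ a ∈ (Finset.univ : Finset (Fin C)) \ {c, c'},
        ((if a = c then (1 : ℝ) else 0) * (if a = c' then (1 : ℝ) else 0) +
          (if a = c then (1 : ℝ) else 0) * ((d : ℝ) * (if a = c' then h else q)) +
          (if a = c' then (1 : ℝ) else 0) * ((d : ℝ) * (if a = c then h else q)) +
          (d : ℝ) ^ 2 * ((if a = c then h else q) * (if a = c' then h else q))) =
        (d : ℝ) ^ 2 * q ^ 2 := by
      intro a ha
      simp only [Finset.mem_sdiff, Finset.mem_insert, Finset.mem_singleton, not_or] at ha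
      simp [ha.2.1, ha.2.2, sq]
    rw [Finset.sum_congr rfl hrest, Finset.sum_const]
    have hcard : ((Finset.univ : Finset (Fin C)) \ {c, c'}).card = C - 2 := by
      rw [Finset.card_sdiff_of_subset (Finset.subset_univ _), Finset.card_univ, Fintype.card_fin,
        Finset.card_pair hcc']
    rw [hcard]
    have hcast : ((C - 2 : ℕ) : ℝ) = (C : ℝ) - 2 := by
      have := Nat.cast_sub hC (R := ℝ); simpa using this
    rw [nsmul_eq_mul, hcast]
    simp [hcc', hcc'.symm, Ne.symm hcc']
    ring
  rw [hsum]
  have hd1 : ((d : ℝ) + 1) ≠ 0 := by positivity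
  have hC1' : ((C : ℝ) - 1) ≠ 0 := by linarith
  rw [hq]
  field_simp
  ring
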